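/- Let E be a Hausdorff locally convex space over ℝ and let Ẽ be its completion. Then the intersection of all k-quasi-complete subspaces G with E ⊆ G ⊆ Ẽ (each carrying the topology induced from Ẽ) is itself k-quasi-complete; in particular, there is a smallest k-quasi-complete subspace of Ẽ containing E (the k-quasi-completion Ê^K of E). -/

import Mathlib

open Filter Topology Set Bornology Pointwise

/-- A sequence in a locally convex space is *Mackey-Cauchy* if there are a bounded
absolutely convex set `B` and a double sequence of nonnegative reals `c` tending to `0`
such that `x n - x m ∈ c n m • B` for all `n, m`. -/
def MackeyCauchy (E : Type*) [AddCommGroup E] [Module ℝ E] [TopologicalSpace E]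
    (x : ℕ → E) : Prop :=
  ∃ (B : Set E) (c : ℕ → ℕ → ℝ),
    IsVonNBounded ℝ B ∧ Convex ℝ B ∧ Balanced ℝ B ∧
    (∀ n m, 0 ≤ c n m) ∧
    Tendsto (fun p : ℕ × ℕ => c p.1 p.2) atTop (𝓝 (0 : ℝ)) ∧
    ∀ n m, x n - x m ∈ c n m • B

/-- A locally convex space is *Mackey-complete* if every Mackey-Cauchy sequence converges. -/
def MackeyComplete (E : Type*) [AddCommGroup E] [Module ℝ E] [TopologicalSpace E] : Prop :=
  ∀ x : ℕ → E, MackeyCauchy E x → ∃ l : E, Tendsto x atTop (𝓝 l)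

/-- A locally convex space is *k-quasi-complete* if the closed absolutely convex hull of
every compact set is compact. -/
def KQuasiComplete (E : Type*) [AddCommGroup E] [Module ℝ E] [TopologicalSpace E] : Prop :=
  ∀ K : Set E, IsCompact K → IsCompact (closure (convexHull ℝ (balancedHull ℝ K)))

section Aux

open UniformSpace

variable {E : Type*} [AddCommGroup E] [Module ℝ E] [UniformSpace E] [IsUniformAddGroup E]
  [ContinuousSMul ℝ E] [UniformContinuousConstSMul ℝ E]

/-- The canonical map into the completion, as a linear map. -/
noncomputable def coeLinCompl (E : Type*) [AddCommGroup E] [Module ℝ E] [UniformSpace E]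
    [IsUniformAddGroup E] [UniformContinuousConstSMul ℝ E] : E →ₗ[ℝ] Completion E where
  toFun := ((↑) : E → Completion E)
  map_add' := fun x y => by exact_mod_cast UniformSpace.Completion.coe_add x y
  map_smul' := fun c x => UniformSpace.Completion.coe_smul c x

/-- Image of a balanced hull under a linear map. -/
theorem image_balancedHull {M N : Type*} [AddCommGroup M] [Module ℝ M] [AddCommGroup N]
    [Module ℝ N] (f : M →ₗ[ℝ] N) (s : Set M) :
    f '' balancedHull ℝ s = balancedHull ℝ (f '' s) := by
  ext x
  simp only [Set.mem_image]
  constructor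
  · rintro ⟨y, hy, rfl⟩
    obtain ⟨r, hr, z, hz, rfl⟩ := mem_balancedHull_iff.1 hy
    exact mem_balancedHull_iff.2 ⟨r, hr, f z, ⟨z, hz, rfl⟩, (f.map_smul r z).symm⟩
  · rintro hx
    obtain ⟨r, hr, w, ⟨z, hz, rfl⟩, rfl⟩ := mem_balancedHull_iff.1 hx
    exact ⟨r • z, mem_balancedHull_iff.2 ⟨r, hr, z, hz, rfl⟩, f.map_smul r z⟩

theorem smul_closure_image_subset {D : Set E} (hD : Balanced ℝ D) {a : ℝ} (ha : ‖a‖ ≤ 1) :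
    a • closure (((↑) : E → Completion E) '' D) ⊆ closure (((↑) : E → Completion E) '' D) := by
  have hc : Continuous (fun y : Completion E => a • y) :=
    (uniformContinuous_const_smul a).continuous
  calc a • closure (((↑) : E → Completion E) '' D)
      ⊆ closure (a • (((↑) : E → Completion E) '' D)) := by
        exact smul_closure_subset a _
    _ ⊆ closure (((↑) : E → Completion E) '' D) := by
        apply closure_mono
        rintro _ ⟨_, ⟨y, hy, rfl⟩, rfl⟩
        exact ⟨a • y, hD.smul_mem ha hy, (UniformSpace.Completion.coe_smul a y)⟩

theorem continuousSMul_completion : ContinuousSMul ℝ (Completion E) := by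
  have hcoe0 : ((0 : E) : Completion E) = 0 := UniformSpace.Completion.coe_zero
  have hpre : ∀ W ∈ 𝓝 (0 : Completion E), ((↑) : E → Completion E) ⁻¹' W ∈ 𝓝 (0 : E) := by
    intro W hW
    have := (UniformSpace.Completion.continuous_coe E).tendsto (0 : E)
    rw [hcoe0] at this
    exact this hW
  have hCnhds : ∀ D : Set E, D ∈ 𝓝 (0 : E) →
      closure (((↑) : E → Completion E) '' D) ∈ 𝓝 (0 : Completion E) := by
    intro D hD
    have := (UniformSpace.Completion.isDenseInducing_coe).closure_image_mem_nhds hD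
    rwa [hcoe0] at this
  apply ContinuousSMul.of_nhds_zero
  · -- joint continuity at (0,0)
    rw [Filter.tendsto_def]
    intro U hU
    obtain ⟨W, ⟨hW, hWc⟩, hWU⟩ := (closed_nhds_basis (0 : Completion E)).mem_iff.1 hU
    obtain ⟨D, ⟨hD1, hD2⟩, hDW⟩ := (nhds_basis_balanced ℝ E).mem_iff.1 (hpre W hW)
    set C := closure (((↑) : E → Completion E) '' D) with hCdef
    have hCW : C ⊆ W := by
      rw [← hWc.closure_eq]
      exact closure_mono (Set.image_subset_iff.2 hDW)
    refine Filter.mem_of_superset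
      (Filter.prod_mem_prod (Metric.closedBall_mem_nhds (0 : ℝ) one_pos) (hCnhds D hD1)) ?_
    rintro ⟨a, y⟩ ⟨ha, hy⟩
    have ha' : ‖a‖ ≤ 1 := by simpa [Real.norm_eq_abs] using mem_closedBall_zero_iff.1 ha
    exact hWU (hCW (smul_closure_image_subset hD2 ha' ⟨y, hy, rfl⟩))
  · -- continuity in the scalar at 0, for fixed m
    intro m
    rw [Filter.tendsto_def]
    intro U hU
    obtain ⟨W, hW, hWU⟩ := exists_nhds_zero_half hU
    obtain ⟨W', ⟨hW', hW'c⟩, hW'W⟩ := (closed_nhds_basis (0 : Completion E)).mem_iff.1 hW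
    obtain ⟨D, ⟨hD1, hD2⟩, hDW⟩ := (nhds_basis_balanced ℝ E).mem_iff.1 (hpre W' hW')
    set C := closure (((↑) : E → Completion E) '' D) with hCdef
    have hCW : C ⊆ W := by
      refine subset_trans ?_ hW'W
      rw [← hW'c.closure_eq]
      exact closure_mono (Set.image_subset_iff.2 hDW)
    -- pick x ∈ E with m - ↑x ∈ C
    have hnb : {y : Completion E | m - y ∈ C} ∈ 𝓝 m := by
      have hcont : Tendsto (fun y : Completion E => m - y) (𝓝 m) (𝓝 (m - m)) :=
        (continuous_const.sub continuous_id).tendsto m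
      rw [sub_self] at hcont
      exact hcont (hCnhds D hD1)
    obtain ⟨x, hx⟩ := UniformSpace.Completion.denseRange_coe.mem_nhds hnb
    have hx : m - (x : Completion E) ∈ C := hx
    -- eventually, a • x is small and ‖a‖ ≤ 1
    have h1 : {a : ℝ | ((a • x : E) : Completion E) ∈ W} ∈ 𝓝 (0 : ℝ) := by
      have hsx : Tendsto (fun a : ℝ => a • x) (𝓝 0) (𝓝 ((0 : ℝ) • x)) :=
        tendsto_id.smul_const x
      rw [zero_smul] at hsx
      exact hsx (hpre W hW)
    refine Filter.mem_of_superset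
      (Filter.inter_mem h1 (Metric.closedBall_mem_nhds (0 : ℝ) one_pos)) ?_
    rintro a ⟨ha1, ha2⟩
    have ha' : ‖a‖ ≤ 1 := by simpa [Real.norm_eq_abs] using mem_closedBall_zero_iff.1 ha2
    have hsplit : a • m = ((a • x : E) : Completion E) + a • (m - (x : Completion E)) := by
      rw [UniformSpace.Completion.coe_smul, ← smul_add]
      congr 1
      abel
    have haw : a • (m - (x : Completion E)) ∈ C :=
      smul_closure_image_subset hD2 ha' ⟨_, hx, rfl⟩
    rw [Set.mem_preimage, hsplit]
    exact hWU _ ha1 _ (hCW haw)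
  · intro a
    have hc : Continuous (fun y : Completion E => a • y) :=
      (uniformContinuous_const_smul a).continuous
    simpa [smul_zero] using hc.tendsto (0 : Completion E)

theorem locallyConvexSpace_completion [LocallyConvexSpace ℝ E] :
    LocallyConvexSpace ℝ (Completion E) := by
  haveI : ContinuousSMul ℝ (Completion E) := continuousSMul_completion
  rw [locallyConvexSpace_iff_exists_convex_subset_zero]
  intro U hU
  obtain ⟨W, ⟨hW, hWc⟩, hWU⟩ := (closed_nhds_basis (0 : Completion E)).mem_iff.1 hU
  have hcoe0 : ((0 : E) : Completion E) = 0 := UniformSpace.Completion.coe_zero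
  have hpre : ((↑) : E → Completion E) ⁻¹' W ∈ 𝓝 (0 : E) := by
    have := (UniformSpace.Completion.continuous_coe E).tendsto (0 : E)
    rw [hcoe0] at this
    exact this hW
  obtain ⟨D, hD1, hD2, hDW⟩ :=
    (locallyConvexSpace_iff_exists_convex_subset_zero ℝ E).1 ‹_› _ hpre
  refine ⟨closure (((↑) : E → Completion E) '' D), ?_, ?_, ?_⟩
  · have := (UniformSpace.Completion.isDenseInducing_coe).closure_image_mem_nhds hD1
    rwa [hcoe0] at this
  · have : ((↑) : E → Completion E) '' D = (coeLinCompl E) '' D := rfl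
    rw [this]
    exact (hD2.linear_image (coeLinCompl E)).closure
  · calc closure (((↑) : E → Completion E) '' D)
        ⊆ closure W := closure_mono (Set.image_subset_iff.2 hDW)
      _ = W := hWc.closure_eq
      _ ⊆ U := hWU

end Aux

/-- For a Hausdorff locally convex space `E` over `ℝ`, the intersection of all
k-quasi-complete subspaces of the completion `Ẽ` of `E` containing `E` is itself
k-quasi-complete; i.e. it is the least element of the family of such subspaces
(the k-quasi-completion of `E`). -/
theorem kQuasiCompletion_isLeast
    (E : Type*) [AddCommGroup E] [Module ℝ E] [UniformSpace E] [IsUniformAddGroup E]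
    [ContinuousSMul ℝ E] [LocallyConvexSpace ℝ E] [T2Space E]
    [UniformContinuousConstSMul ℝ E] :
    IsLeast {G : Submodule ℝ (UniformSpace.Completion E) |
        Set.range ((↑) : E → UniformSpace.Completion E) ⊆ (G : Set (UniformSpace.Completion E)) ∧
        KQuasiComplete G}
      (sInf {G : Submodule ℝ (UniformSpace.Completion E) |
        Set.range ((↑) : E → UniformSpace.Completion E) ⊆ (G : Set (UniformSpace.Completion E)) ∧
        KQuasiComplete G}) := by
  classical
  haveI : ContinuousSMul ℝ (UniformSpace.Completion E) := continuousSMul_completion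
  haveI : LocallyConvexSpace ℝ (UniformSpace.Completion E) := locallyConvexSpace_completion
  set S : Set (Submodule ℝ (UniformSpace.Completion E)) :=
    {G : Submodule ℝ (UniformSpace.Completion E) |
      Set.range ((↑) : E → UniformSpace.Completion E) ⊆ (G : Set (UniformSpace.Completion E)) ∧
      KQuasiComplete G} with hS
  refine ⟨⟨fun x hx => Submodule.mem_sInf.2 fun G hG => hG.1 hx, ?_⟩,
    fun G hG => sInf_le hG⟩
  set I : Submodule ℝ (UniformSpace.Completion E) := sInf S with hI
  intro K hK
  -- the compact set, viewed in the completion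
  set Kv : Set (UniformSpace.Completion E) := Subtype.val '' K with hKv
  have hK' : IsCompact Kv := hK.image continuous_subtype_val
  set H : Set (UniformSpace.Completion E) := convexHull ℝ (balancedHull ℝ Kv) with hH
  -- the closed absolutely convex hull of `Kv` in the completion is compact
  have htb : TotallyBounded H := by
    have := totallyBounded_absConvexHull.2 hK'.totallyBounded
    rwa [absConvexHull_eq_convexHull_balancedHull] at this
  have hChat : IsCompact (closure H) :=
    isCompact_iff_totallyBounded_isComplete.2 ⟨htb.closure, isClosed_closure.isComplete⟩
  -- the closed absolutely convex hull is contained in every member of the family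
  have hChatI : closure H ⊆ (I : Set (UniformSpace.Completion E)) := by
    intro z hz
    refine Submodule.mem_sInf.2 fun G hG => ?_
    have hle : I ≤ G := sInf_le hG
    set ι : I → G := fun y => ⟨y.1, hle y.2⟩ with hι
    have hιc : Continuous ι := Continuous.subtype_mk continuous_subtype_val _
    have hKG : IsCompact (ι '' K) := hK.image hιc
    have hCG : IsCompact (closure (convexHull ℝ (balancedHull ℝ (ι '' K)))) :=
      hG.2 (ι '' K) hKG
    have hcomp : IsCompact ((Subtype.val : G → UniformSpace.Completion E) ''
        (closure (convexHull ℝ (balancedHull ℝ (ι '' K))))) :=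
      hCG.image continuous_subtype_val
    have hclosed : IsClosed ((Subtype.val : G → UniformSpace.Completion E) ''
        (closure (convexHull ℝ (balancedHull ℝ (ι '' K))))) := hcomp.isClosed
    have himg : (Subtype.val : G → UniformSpace.Completion E) '' (ι '' K) = Kv := by
      rw [← Set.image_comp]; rfl
    have hHeq : H = (Subtype.val : G → UniformSpace.Completion E) ''
        (convexHull ℝ (balancedHull ℝ (ι '' K))) := by
      have h1 := (G.subtype).image_convexHull (balancedHull ℝ (ι '' K))
      have h2 := image_balancedHull G.subtype (ι '' K)
      rw [Submodule.coe_subtype] at h1 h2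
      rw [h1, h2, himg]
    have hHsub : H ⊆ (Subtype.val : G → UniformSpace.Completion E) ''
        (closure (convexHull ℝ (balancedHull ℝ (ι '' K)))) := by
      rw [hHeq]
      exact Set.image_mono subset_closure
    obtain ⟨w, _, rfl⟩ := closure_minimal hHsub hclosed hz
    exact w.2
  -- conclude for the intersection
  have hveq : (Subtype.val : I → UniformSpace.Completion E) ''
      (convexHull ℝ (balancedHull ℝ K)) = H := by
    have h1 := (I.subtype).image_convexHull (balancedHull ℝ K)
    have h2 := image_balancedHull I.subtype K
    rw [Submodule.coe_subtype] at h1 h2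
    rw [h1, h2]
  rw [Topology.IsEmbedding.subtypeVal.isCompact_iff,
    Topology.IsEmbedding.subtypeVal.closure_eq_preimage_closure_image,
    Set.image_preimage_eq_inter_range, hveq, Subtype.range_coe_subtype]
  have : closure H ∩ {x | x ∈ I} = closure H :=
    Set.inter_eq_self_of_subset_left hChatI
  rw [this]
  exact hChat
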